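/- Let A₁,…,A_d be Hermitian n×n matrices and U ∈ O(d), with Âⱼ = Σₛ u_{js} Aₛ. Then λ is in the Clifford spectrum of (A₁,…,A_d) if and only if Uλ is in the Clifford spectrum of (Â₁,…,Â_d). -/

import Mathlib

open scoped Kronecker Matrix

section Aux

variable {d m : ℕ}

/-- `W` acts on the gammas by a (signed) conjugation. -/
def CliffGood (γ : Fin d → Matrix (Fin m) (Fin m) ℂ) (W : Matrix (Fin d) (Fin d) ℝ) : Prop :=
  ∃ (S T : Matrix (Fin m) (Fin m) ℂ) (ε : ℂ), ε * ε = 1 ∧ S * T = 1 ∧ T * S = 1 ∧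
    ∀ j, (∑ s, (W j s : ℂ) • γ s) = ε • (S * γ j * T)

theorem cliffGood_one (γ : Fin d → Matrix (Fin m) (Fin m) ℂ) : CliffGood γ 1 := by
  refine ⟨1, 1, 1, by ring, by simp, by simp, fun j => ?_⟩
  simp [Matrix.one_apply, ite_smul]

theorem cliffGood_mul {γ : Fin d → Matrix (Fin m) (Fin m) ℂ}
    {W₁ W₂ : Matrix (Fin d) (Fin d) ℝ} (h₁ : CliffGood γ W₁) (h₂ : CliffGood γ W₂) :
    CliffGood γ (W₁ * W₂) := by
  obtain ⟨S₁, T₁, ε₁, hε₁, hST₁, hTS₁, h₁⟩ := h₁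
  obtain ⟨S₂, T₂, ε₂, hε₂, hST₂, hTS₂, h₂⟩ := h₂
  refine ⟨S₂ * S₁, T₁ * T₂, ε₁ * ε₂, ?_, ?_, ?_, fun j => ?_⟩
  · rw [mul_mul_mul_comm, hε₁, hε₂, one_mul]
  · rw [mul_assoc, ← mul_assoc S₁, hST₁, one_mul, hST₂]
  · rw [mul_assoc, ← mul_assoc T₂, hTS₂, one_mul, hTS₁]
  · have expand : ∀ s, (((W₁ * W₂) j s : ℝ) : ℂ) = ∑ t, (W₁ j t : ℂ) * (W₂ t s : ℂ) := by
      intro s; rw [Matrix.mul_apply]; push_cast; rfl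
    calc ∑ s, (((W₁ * W₂) j s : ℝ) : ℂ) • γ s
        = ∑ s, ∑ t, (W₁ j t : ℂ) • ((W₂ t s : ℂ) • γ s) := by
          simp only [expand, Finset.sum_smul, mul_smul]
      _ = ∑ t, (W₁ j t : ℂ) • (∑ s, (W₂ t s : ℂ) • γ s) := by
          rw [Finset.sum_comm]; simp only [Finset.smul_sum]
      _ = ∑ t, (W₁ j t : ℂ) • (ε₂ • (S₂ * γ t * T₂)) := by simp only [h₂]
      _ = ε₂ • (S₂ * (∑ t, (W₁ j t : ℂ) • γ t) * T₂) := by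
          rw [Matrix.mul_sum, Matrix.sum_mul, Finset.smul_sum]
          refine Finset.sum_congr rfl fun t _ => ?_
          rw [Matrix.mul_smul, Matrix.smul_mul, smul_comm]
      _ = (ε₁ * ε₂) • (S₂ * S₁ * γ j * (T₁ * T₂)) := by
          rw [h₁ j, Matrix.mul_smul, Matrix.smul_mul, smul_smul, mul_comm ε₂ ε₁]
          congr 1
          noncomm_ring

end Aux

section Refl

variable {d m : ℕ} {γ : Fin d → Matrix (Fin m) (Fin m) ℂ}

theorem cliffGood_reflection
    (hsq : ∀ j, γ j * γ j = 1)
    (hanti : ∀ j k, j ≠ k → γ j * γ k = -(γ k * γ j))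
    (w : Fin d → ℝ) (hw : ∑ k, w k * w k = 1) :
    CliffGood γ (Matrix.of fun i j => (if i = j then (1:ℝ) else 0) - 2 * w i * w j) := by
  set g : Matrix (Fin m) (Fin m) ℂ := ∑ k, (w k : ℂ) • γ k with hg
  have hcomm : ∀ j, γ j * g + g * γ j = ((2 * w j : ℝ) : ℂ) • 1 := by
    intro j
    rw [hg, Finset.mul_sum, Finset.sum_mul, ← Finset.sum_add_distrib,
      Finset.sum_eq_single j]
    · rw [Matrix.mul_smul, Matrix.smul_mul, hsq j]
      push_cast
      rw [two_mul, add_smul]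
    · intro k _ hkj
      rw [Matrix.mul_smul, Matrix.smul_mul, hanti j k (Ne.symm hkj), ← smul_add,
        neg_add_cancel, smul_zero]
    · intro h; exact absurd (Finset.mem_univ j) h
  have h1 : g * g = ∑ k, (w k : ℂ) • (γ k * g) := by
    nth_rewrite 1 [hg]
    rw [Matrix.sum_mul]
    simp only [Matrix.smul_mul]
  have h2 : g * g = ∑ k, (w k : ℂ) • (g * γ k) := by
    nth_rewrite 2 [hg]
    rw [Matrix.mul_sum]
    simp only [Matrix.mul_smul]
  have hgg1 : g * g = 1 := by
    have hsum : g * g + g * g = ((2:ℝ) : ℂ) • (1 : Matrix (Fin m) (Fin m) ℂ) := by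
      calc g * g + g * g = ∑ k, (w k : ℂ) • (γ k * g + g * γ k) := by
            nth_rewrite 2 [h2]
            nth_rewrite 1 [h1]
            rw [← Finset.sum_add_distrib]
            simp only [smul_add]
        _ = ∑ k, ((w k * (2 * w k) : ℝ) : ℂ) • (1 : Matrix (Fin m) (Fin m) ℂ) := by
            refine Finset.sum_congr rfl fun k _ => ?_
            rw [hcomm k, smul_smul]
            norm_cast
        _ = ((∑ k, w k * (2 * w k) : ℝ) : ℂ) • 1 := by
            rw [← Finset.sum_smul]
            norm_cast
        _ = ((2:ℝ) : ℂ) • 1 := by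
            congr 2
            have : ∀ k ∈ Finset.univ, w k * (2 * w k) = 2 * (w k * w k) :=
              fun k _ => by ring
            rw [Finset.sum_congr rfl this, ← Finset.mul_sum, hw, mul_one]
    have h2' : (2 : ℂ) • (g * g) = (2 : ℂ) • (1 : Matrix (Fin m) (Fin m) ℂ) := by
      rw [two_smul, hsum]
      norm_num
    exact smul_right_injective _ (two_ne_zero) h2'
  have hconj : ∀ j, g * γ j * g
      = ∑ s, (((2 * w j * w s - if j = s then 1 else 0 : ℝ)) : ℂ) • γ s := by
    intro j
    have h3 : g * γ j = ((2 * w j : ℝ) : ℂ) • 1 - γ j * g := eq_sub_of_add_eq' (hcomm j)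
    have h4 : g * γ j * g = ((2 * w j : ℝ) : ℂ) • g - γ j := by
      rw [h3, Matrix.sub_mul, Matrix.smul_mul, one_mul, mul_assoc, hgg1, mul_one]
    rw [h4]
    have h5 : ∀ s, (((2 * w j * w s - if j = s then 1 else 0 : ℝ)) : ℂ) • γ s
        = ((2 * w j : ℝ) : ℂ) • ((w s : ℂ) • γ s) - (if j = s then γ s else 0) := by
      intro s
      rw [smul_smul]
      push_cast
      split_ifs <;> module
    rw [Finset.sum_congr rfl fun s _ => h5 s, Finset.sum_sub_distrib, ← Finset.smul_sum,
      Finset.sum_ite_eq, if_pos (Finset.mem_univ j), ← hg]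
  refine ⟨g, g, -1, by ring, hgg1, hgg1, fun j => ?_⟩
  rw [hconj j, neg_one_smul, ← Finset.sum_neg_distrib]
  refine Finset.sum_congr rfl fun s _ => ?_
  rw [← neg_smul, Matrix.of_apply]
  norm_cast
  congr 1
  push_cast
  ring

end Refl

section MatIso

variable {d : ℕ}

/-- The matrix of a linear isometry of Euclidean space. -/
noncomputable def matOf (φ : EuclideanSpace ℝ (Fin d) ≃ₗᵢ[ℝ] EuclideanSpace ℝ (Fin d)) :
    Matrix (Fin d) (Fin d) ℝ :=
  Matrix.of fun i j => φ (EuclideanSpace.single j 1) i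

theorem euclid_sum_single (x : EuclideanSpace ℝ (Fin d)) :
    x = ∑ i, x i • EuclideanSpace.single i (1:ℝ) := by
  have h := (EuclideanSpace.basisFun (Fin d) ℝ).sum_repr x
  simp only [EuclideanSpace.basisFun_apply, EuclideanSpace.basisFun_repr] at h
  exact h.symm

theorem matOf_mul (φ ψ : EuclideanSpace ℝ (Fin d) ≃ₗᵢ[ℝ] EuclideanSpace ℝ (Fin d)) :
    matOf (φ * ψ) = matOf φ * matOf ψ := by
  ext i j
  have h1 : (φ * ψ) (EuclideanSpace.single j 1) = φ (ψ (EuclideanSpace.single j 1)) := rfl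
  have h2 : φ (ψ (EuclideanSpace.single j 1))
      = ∑ k, (ψ (EuclideanSpace.single j 1) k) • φ (EuclideanSpace.single k 1) := by
    conv_lhs => rw [euclid_sum_single (ψ (EuclideanSpace.single j 1))]
    rw [map_sum]
    simp only [map_smul]
  show (φ * ψ) (EuclideanSpace.single j 1) i = _
  rw [h1, h2]
  rw [show (∑ k, (ψ (EuclideanSpace.single j 1) k) • φ (EuclideanSpace.single k 1)) i
      = ∑ k, (ψ (EuclideanSpace.single j 1) k) * φ (EuclideanSpace.single k 1) i from by
    rw [WithLp.ofLp_sum, Finset.sum_apply]; rfl]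
  rw [Matrix.mul_apply]
  exact Finset.sum_congr rfl fun k _ => mul_comm _ _

end MatIso

section MatIso2

variable {d m : ℕ} {γ : Fin d → Matrix (Fin m) (Fin m) ℂ}

theorem matOf_reflection_good
    (hsq : ∀ j, γ j * γ j = 1)
    (hanti : ∀ j k, j ≠ k → γ j * γ k = -(γ k * γ j))
    (v : EuclideanSpace ℝ (Fin d)) :
    CliffGood γ (matOf (Submodule.reflection (ℝ ∙ v)ᗮ)) := by
  by_cases hv : v = 0
  · have hmat : matOf (d := d) (Submodule.reflection (ℝ ∙ v)ᗮ) = 1 := by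
      ext i j
      have : EuclideanSpace.single j (1:ℝ) ∈ (ℝ ∙ v)ᗮ := by
        rw [hv, Submodule.span_zero_singleton, Submodule.bot_orthogonal_eq_top]
        trivial
      show (Submodule.reflection (ℝ ∙ v)ᗮ) (EuclideanSpace.single j 1) i = _
      rw [Submodule.reflection_mem_subspace_eq_self this, EuclideanSpace.single_apply,
        Matrix.one_apply]
    rw [hmat]
    exact cliffGood_one γ
  · set w : EuclideanSpace ℝ (Fin d) := ‖v‖⁻¹ • v with hwdef
    have hnv : ‖v‖ ≠ 0 := norm_ne_zero_iff.mpr hv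
    have hnw : ‖w‖ = 1 := norm_smul_inv_norm hv
    have hw : ∑ k, w k * w k = 1 := by
      have h1 : (inner ℝ w w : ℝ) = ∑ k, w k * w k := by
        rw [PiLp.inner_apply]
        rfl
      rw [← h1, real_inner_self_eq_norm_mul_norm, hnw, mul_one]
    have hmat : matOf (d := d) (Submodule.reflection (ℝ ∙ v)ᗮ)
        = Matrix.of fun i j => (if i = j then (1:ℝ) else 0) - 2 * w i * w j := by
      ext i j
      show (Submodule.reflection (ℝ ∙ v)ᗮ) (EuclideanSpace.single j 1) i = _
      rw [Submodule.reflection_orthogonal_apply, Submodule.reflection_singleton_apply]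
      have hinner : (inner ℝ v (EuclideanSpace.single j (1:ℝ)) : ℝ) = v j := by
        rw [EuclideanSpace.inner_single_right]
        simp
      rw [hinner]
      rw [two_smul ℕ]
      rw [PiLp.neg_apply, PiLp.sub_apply, PiLp.add_apply, PiLp.smul_apply,
        EuclideanSpace.single_apply, Matrix.of_apply, smul_eq_mul]
      simp only [RCLike.ofReal_real_eq_id, id_eq]
      have hww : w i * w j = v i * v j / ‖v‖ ^ 2 := by
        rw [hwdef]
        show (‖v‖⁻¹ * v i) * (‖v‖⁻¹ * v j) = _
        rw [eq_div_iff (pow_ne_zero 2 hnv), sq]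
        field_simp
      rw [mul_assoc, hww]
      field_simp
      ring
    rw [hmat]
    exact cliffGood_reflection hsq hanti w hw

theorem cliffGood_matOf
    (hsq : ∀ j, γ j * γ j = 1)
    (hanti : ∀ j k, j ≠ k → γ j * γ k = -(γ k * γ j))
    (φ : EuclideanSpace ℝ (Fin d) ≃ₗᵢ[ℝ] EuclideanSpace ℝ (Fin d)) :
    CliffGood γ (matOf φ) := by
  obtain ⟨l, -, rfl⟩ := φ.reflections_generate_dim
  induction l with
  | nil =>
      have : matOf (d := d) (List.prod (List.map (fun v => Submodule.reflection (ℝ ∙ v)ᗮ) [])) = 1 := by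
        ext i j
        show (1 : EuclideanSpace ℝ (Fin d) ≃ₗᵢ[ℝ] EuclideanSpace ℝ (Fin d))
            (EuclideanSpace.single j 1) i = _
        rw [LinearIsometryEquiv.coe_one, id]
        rw [EuclideanSpace.single_apply, Matrix.one_apply]
      rw [this]
      exact cliffGood_one γ
  | cons v l ih =>
      rw [List.map_cons, List.prod_cons, matOf_mul]
      exact cliffGood_mul (matOf_reflection_good hsq hanti v) ih

end MatIso2

section Ortho

variable {d : ℕ}

theorem mulVec_dot (U : Matrix (Fin d) (Fin d) ℝ)
    (hU : U ∈ Matrix.orthogonalGroup (Fin d) ℝ) (x y : Fin d → ℝ) :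
    ∑ i, U.mulVec x i * U.mulVec y i = ∑ i, x i * y i := by
  have h1 : ∑ i, U.mulVec x i * U.mulVec y i = U.mulVec x ⬝ᵥ U.mulVec y := rfl
  have h2 : star U * U = 1 := (Matrix.mem_unitaryGroup_iff'.mp hU)
  have h3 : Uᵀ * U = 1 := by rwa [Matrix.star_eq_conjTranspose, Matrix.conjTranspose_eq_transpose_of_trivial] at h2
  rw [h1, Matrix.dotProduct_mulVec, ← Matrix.mulVec_transpose, Matrix.mulVec_mulVec, h3,
    Matrix.one_mulVec]
  rfl

/-- The isometry of Euclidean space given by an orthogonal matrix. -/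
noncomputable def orthoIso (U : Matrix (Fin d) (Fin d) ℝ)
    (hU : U ∈ Matrix.orthogonalGroup (Fin d) ℝ) :
    EuclideanSpace ℝ (Fin d) ≃ₗᵢ[ℝ] EuclideanSpace ℝ (Fin d) :=
  LinearEquiv.isometryOfInner
    ((WithLp.linearEquiv 2 ℝ (Fin d → ℝ)).trans
      ((Matrix.UnitaryGroup.toLinearEquiv ⟨U, hU⟩).trans
        (WithLp.linearEquiv 2 ℝ (Fin d → ℝ)).symm))
    (by
      intro x y
      rw [PiLp.inner_apply, PiLp.inner_apply]
      simp only [RCLike.inner_apply, starRingEnd_apply, star_trivial]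
      exact mulVec_dot U hU y x)

theorem matOf_orthoIso (U : Matrix (Fin d) (Fin d) ℝ)
    (hU : U ∈ Matrix.orthogonalGroup (Fin d) ℝ) :
    matOf (orthoIso U hU) = U := by
  ext i j
  show U.mulVec (Pi.single j 1) i = U i j
  rw [Matrix.mulVec_single]
  exact mul_one _

end Ortho

section KronHelp

variable {n m : ℕ} {ι : Type*}

theorem sum_kron (s : Finset ι) (f : ι → Matrix (Fin n) (Fin n) ℂ)
    (B : Matrix (Fin m) (Fin m) ℂ) :
    (∑ i ∈ s, f i) ⊗ₖ B = ∑ i ∈ s, (f i ⊗ₖ B) := by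
  ext ⟨i₁, i₂⟩ ⟨j₁, j₂⟩
  simp [Matrix.kroneckerMap_apply, Matrix.sum_apply, Finset.sum_mul]

theorem kron_sum (s : Finset ι) (A : Matrix (Fin n) (Fin n) ℂ)
    (f : ι → Matrix (Fin m) (Fin m) ℂ) :
    A ⊗ₖ (∑ i ∈ s, f i) = ∑ i ∈ s, (A ⊗ₖ f i) := by
  ext ⟨i₁, i₂⟩ ⟨j₁, j₂⟩
  simp [Matrix.kroneckerMap_apply, Matrix.sum_apply, Finset.mul_sum]

end KronHelp

theorem clifford_spectrum_rotation
    {d n m : ℕ} (A : Fin d → Matrix (Fin n) (Fin n) ℂ)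
    (hA : ∀ j, (A j).IsHermitian)
    (γ : Fin d → Matrix (Fin m) (Fin m) ℂ)
    (hherm : ∀ j, (γ j).IsHermitian)
    (hsq : ∀ j, γ j * γ j = 1)
    (hanti : ∀ j k, j ≠ k → γ j * γ k = -(γ k * γ j))
    (U : Matrix (Fin d) (Fin d) ℝ) (hU : U ∈ Matrix.orthogonalGroup (Fin d) ℝ)
    (lam : Fin d → ℝ) :
    (¬ IsUnit (∑ j, ((A j - (lam j : ℂ) • 1) ⊗ₖ γ j))) ↔
    (¬ IsUnit (∑ j, (((∑ s, (U j s : ℂ) • A s) - (U.mulVec lam j : ℂ) • 1) ⊗ₖ γ j))) := by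
  have key : CliffGood γ Uᵀ := by
    have hUt : Uᵀ ∈ Matrix.orthogonalGroup (Fin d) ℝ := by
      have h := Unitary.star_mem hU
      rwa [Matrix.star_eq_conjTranspose,
        Matrix.conjTranspose_eq_transpose_of_trivial] at h
    rw [← matOf_orthoIso Uᵀ hUt]
    exact cliffGood_matOf hsq hanti _
  obtain ⟨S, T, ε, hε, hST, hTS, hγ⟩ := key
  set B : Fin d → Matrix (Fin n) (Fin n) ℂ := fun s => A s - (lam s : ℂ) • 1 with hB
  have main : (∑ j, (((∑ s, (U j s : ℂ) • A s) - ((U.mulVec lam j : ℝ) : ℂ) • 1) ⊗ₖ γ j))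
      = ε • ((1 ⊗ₖ S) * (∑ j, (B j ⊗ₖ γ j)) * (1 ⊗ₖ T)) := by
    have hcoef : ∀ j, ((∑ s, (U j s : ℂ) • A s) - ((U.mulVec lam j : ℝ) : ℂ) • 1)
        = ∑ s, (U j s : ℂ) • B s := by
      intro j
      have hmv : ((U.mulVec lam j : ℝ) : ℂ) = ∑ s, (U j s : ℂ) * (lam s : ℂ) := by
        have h0 : U.mulVec lam j = ∑ s, U j s * lam s := rfl
        rw [h0]; push_cast; rfl
      rw [hB]
      simp only [smul_sub, Finset.sum_sub_distrib]
      congr 1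
      rw [hmv, Finset.sum_smul]
      simp only [smul_smul]
    calc ∑ j, (((∑ s, (U j s : ℂ) • A s) - ((U.mulVec lam j : ℝ) : ℂ) • 1) ⊗ₖ γ j)
        = ∑ j, ∑ s, ((U j s : ℂ) • B s) ⊗ₖ γ j := by
          simp only [hcoef, sum_kron]
      _ = ∑ s, ∑ j, B s ⊗ₖ ((U j s : ℂ) • γ j) := by
          rw [Finset.sum_comm]
          simp only [Matrix.smul_kronecker, Matrix.kronecker_smul]
      _ = ∑ s, B s ⊗ₖ (∑ j, ((Uᵀ s j : ℝ) : ℂ) • γ j) := by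
          simp only [kron_sum, Matrix.transpose_apply]
      _ = ∑ s, B s ⊗ₖ (ε • (S * γ s * T)) := by simp only [hγ]
      _ = ∑ s, ε • ((1 ⊗ₖ S) * (B s ⊗ₖ γ s) * (1 ⊗ₖ T)) := by
          refine Finset.sum_congr rfl fun s _ => ?_
          rw [Matrix.kronecker_smul]
          congr 1
          rw [← Matrix.mul_kronecker_mul, ← Matrix.mul_kronecker_mul, one_mul, mul_one]
      _ = ε • ((1 ⊗ₖ S) * (∑ j, (B j ⊗ₖ γ j)) * (1 ⊗ₖ T)) := by
          rw [← Finset.smul_sum, Matrix.mul_sum, Matrix.sum_mul]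
  rw [main]
  have hPQ : ((1 : Matrix (Fin n) (Fin n) ℂ) ⊗ₖ S) * (1 ⊗ₖ T) = 1 := by
    rw [← Matrix.mul_kronecker_mul, one_mul, hST, Matrix.one_kronecker_one]
  have hQP : ((1 : Matrix (Fin n) (Fin n) ℂ) ⊗ₖ T) * (1 ⊗ₖ S) = 1 := by
    rw [← Matrix.mul_kronecker_mul, one_mul, hTS, Matrix.one_kronecker_one]
  set L : Matrix (Fin n × Fin m) (Fin n × Fin m) ℂ := ∑ j, (B j ⊗ₖ γ j) with hL
  have hE : (ε • (1 : Matrix (Fin n × Fin m) (Fin n × Fin m) ℂ))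
      * (ε • 1) = 1 := by
    rw [Matrix.smul_mul, Matrix.mul_smul, smul_smul, hε, one_smul, one_mul]
  let uE : (Matrix (Fin n × Fin m) (Fin n × Fin m) ℂ)ˣ := ⟨ε • 1, ε • 1, hE, hE⟩
  let uP : (Matrix (Fin n × Fin m) (Fin n × Fin m) ℂ)ˣ := ⟨1 ⊗ₖ S, 1 ⊗ₖ T, hPQ, hQP⟩
  let uQ : (Matrix (Fin n × Fin m) (Fin n × Fin m) ℂ)ˣ := ⟨1 ⊗ₖ T, 1 ⊗ₖ S, hQP, hPQ⟩
  have hrw : ε • ((1 ⊗ₖ S) * L * (1 ⊗ₖ T))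
      = (uE : Matrix _ _ ℂ) * ((uP : Matrix _ _ ℂ) * (L * (uQ : Matrix _ _ ℂ))) := by
    show ε • ((1 ⊗ₖ S) * L * (1 ⊗ₖ T)) = (ε • 1) * ((1 ⊗ₖ S) * (L * (1 ⊗ₖ T)))
    rw [Matrix.smul_mul, one_mul, mul_assoc]
  rw [hrw, Units.isUnit_units_mul, Units.isUnit_units_mul, Units.isUnit_mul_units]
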